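/- arXiv:1702.08900 — 2 statements merged into one kernel-verified Lean document; each statement's English description precedes it below -/
import Mathlib

section
/- For every x > 0, the exponential integral satisfies the two-sided bound (1/2)·log(1 + 2/x) < e^x · E1(x) < log(1 + 1/x), where E1(x) = ∫_x^∞ e^{-y}/y dy. -/
open MeasureTheory Real
open Set Filter Topology

noncomputable def E1 (x : ℝ) : ℝ := ∫ y in Set.Ioi x, Real.exp (-y) / y

lemma E1_intOn {x : ℝ} (hx : 0 < x) :
    IntegrableOn (fun y => Real.exp (-y) / y) (Ioi x) := by
  have h1 : IntegrableOn (fun y => Real.exp (-y) / x) (Ioi x) := by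
    have h := (exp_neg_integrableOn_Ioi x one_pos).div_const x
    simp only [neg_mul, one_mul] at h
    exact h
  refine Integrable.mono' h1 ?_ ?_
  · refine (ContinuousOn.aestronglyMeasurable ?_ measurableSet_Ioi)
    intro y hy
    exact (((continuous_exp.comp continuous_neg).continuousAt).continuousWithinAt).div
      continuousWithinAt_id (ne_of_gt (hx.trans hy))
  · filter_upwards [ae_restrict_mem measurableSet_Ioi] with y hy
    have hy0 : 0 < y := hx.trans hy
    rw [Real.norm_eq_abs, abs_of_nonneg (div_nonneg (exp_pos _).le hy0.le)]
    exact div_le_div_of_nonneg_left (exp_pos _).le hx (le_of_lt hy)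

lemma E1_split {a b : ℝ} (ha : 0 < a) (hab : a ≤ b) :
    E1 a = (∫ y in a..b, Real.exp (-y) / y) + E1 b := by
  rw [intervalIntegral.integral_of_le hab, E1, E1, ← Ioc_union_Ioi_eq_Ioi hab,
    setIntegral_union (Set.Ioc_disjoint_Ioi le_rfl) measurableSet_Ioi
      ((E1_intOn ha).mono_set Set.Ioc_subset_Ioi_self) (E1_intOn (ha.trans_le hab))]

lemma E1_hasDeriv {x : ℝ} (hx : 0 < x) : HasDerivAt E1 (-(Real.exp (-x) / x)) x := by
  have hmeas : StronglyMeasurable (fun y : ℝ => Real.exp (-y) / y) :=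
    ((continuous_exp.comp continuous_neg).measurable.div measurable_id).stronglyMeasurable
  have hcont : ContinuousAt (fun y : ℝ => Real.exp (-y) / y) x :=
    ((continuous_exp.comp continuous_neg).continuousAt).div continuousAt_id hx.ne'
  have h0 : HasDerivAt (fun u => E1 x - ∫ t in x..u, Real.exp (-t) / t)
      (-(Real.exp (-x) / x)) x := by
    exact (intervalIntegral.integral_hasDerivAt_right IntervalIntegrable.refl
      hmeas.stronglyMeasurableAtFilter hcont).const_sub (E1 x)
  refine h0.congr_of_eventuallyEq ?_
  filter_upwards [eventually_gt_nhds hx] with y hy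
  rcases le_total x y with h | h
  · have := E1_split hx h
    linarith
  · have h1 := E1_split hy h
    rw [intervalIntegral.integral_symm] at h1
    linarith

lemma E1_tendsto : Tendsto E1 atTop (𝓝 0) := by
  apply squeeze_zero' (g := fun x => Real.exp (-x))
  · filter_upwards [eventually_gt_atTop 0] with x hx
    exact setIntegral_nonneg measurableSet_Ioi
      (fun y hy => div_nonneg (exp_pos _).le (hx.trans hy).le)
  · filter_upwards [eventually_ge_atTop 1] with x hx
    have hx0 : (0:ℝ) < x := lt_of_lt_of_le one_pos hx
    have h1 : E1 x ≤ ∫ y in Ioi x, Real.exp (-y) := by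
      refine setIntegral_mono_on (E1_intOn hx0)
        (by simpa using exp_neg_integrableOn_Ioi x one_pos) measurableSet_Ioi ?_
      intro y hy
      have hy1 : (1:ℝ) ≤ y := hx.trans (le_of_lt hy)
      calc Real.exp (-y) / y ≤ Real.exp (-y) / 1 :=
            div_le_div_of_nonneg_left (exp_pos _).le one_pos hy1
        _ = Real.exp (-y) := div_one _
    calc E1 x ≤ ∫ y in Ioi x, Real.exp (-y) := h1
      _ = Real.exp (-x) := integral_exp_neg_Ioi x
  · exact tendsto_exp_neg_atTop_nhds_zero

lemma aux_neg {φ d : ℝ → ℝ} (hd : ∀ y, 0 < y → HasDerivAt φ (d y) y)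
    (hpos : ∀ y, 0 < y → 0 < d y) (hlim : Tendsto φ atTop (𝓝 0))
    {x : ℝ} (hx : 0 < x) : φ x < 0 := by
  have hmono : StrictMonoOn φ (Ici x) := by
    refine strictMonoOn_of_deriv_pos (convex_Ici x) ?_ ?_
    · intro y hy
      exact ((hd y (hx.trans_le hy)).differentiableAt).continuousAt.continuousWithinAt
    · intro y hy
      rw [interior_Ici] at hy
      rw [(hd y (hx.trans hy)).deriv]
      exact hpos y (hx.trans hy)
  have h1 : φ (x + 1) ≤ 0 := by
    refine ge_of_tendsto hlim ?_
    filter_upwards [eventually_ge_atTop (x + 1)] with y hy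
    rcases eq_or_lt_of_le hy with h | h
    · rw [h]
    · exact (hmono (by simp : x ≤ x + 1) (le_trans (by simp) hy) h).le
  exact lt_of_lt_of_le (hmono self_mem_Ici (by simp : x ≤ x + 1) (lt_add_one x)) h1

-- key inequality (i): 1/(y+1) < log (1 + 1/y)
lemma key1 {y : ℝ} (hy : 0 < y) : 1 / (y + 1) < Real.log (1 + 1 / y) := by
  have h1 : (0:ℝ) < y / (y + 1) := div_pos hy (by linarith)
  have h2 : y / (y + 1) ≠ 1 := by
    intro h
    rw [div_eq_one_iff_eq (by positivity)] at h
    linarith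
  have h3 := Real.log_lt_sub_one_of_pos h1 h2
  have h4 : Real.log (1 + 1 / y) = - Real.log (y / (y + 1)) := by
    rw [← Real.log_inv]
    congr 1
    field_simp
  rw [h4]
  have h5 : y / (y + 1) - 1 = -(1 / (y + 1)) := by field_simp; ring
  linarith [h3, h5.symm ▸ h3]

-- key inequality (ii): (1/2) log (1 + 2/y) < (y+1)/(y*(y+2))
lemma key2 {y : ℝ} (hy : 0 < y) :
    (1 / 2) * Real.log (1 + 2 / y) < (y + 1) / (y * (y + 2)) := by
  set v : ℝ := (y + 2) / y with hv
  have hv1 : 1 < v := by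
    rw [hv, lt_div_iff₀ hy]; linarith
  have hv0 : 0 < v := lt_trans one_pos hv1
  have hw : 0 < Real.log v := Real.log_pos hv1
  have hs := Real.self_lt_sinh_iff.mpr hw
  rw [Real.sinh_eq, Real.exp_log hv0, Real.exp_neg, Real.exp_log hv0] at hs
  have heq : 1 + 2 / y = v := by rw [hv]; field_simp
  rw [heq]
  have hvv : v - v⁻¹ = 4 * ((y + 1) / (y * (y + 2))) := by
    rw [hv]
    field_simp
    ring
  nlinarith [hs, hvv]

theorem e1_two_sided_bound (x : ℝ) (hx : 0 < x) :
    (1 / 2) * Real.log (1 + 2 / x) < Real.exp x * E1 x ∧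
    Real.exp x * E1 x < Real.log (1 + 1 / x) := by
  have hlog1 : ∀ y : ℝ, 0 < y →
      HasDerivAt (fun y : ℝ => Real.log (1 + 1 / y)) (-(1 / (y * (y + 1)))) y := by
    intro y hy
    have hinner : HasDerivAt (fun y : ℝ => 1 + 1 / y) (-(y ^ 2)⁻¹) y := by
      simpa [one_div] using ((hasDerivAt_inv hy.ne').const_add 1)
    have hne : 1 + 1 / y ≠ 0 := by positivity
    have := hinner.log hne
    convert this using 1
    field_simp
  have hlog2 : ∀ y : ℝ, 0 < y →
      HasDerivAt (fun y : ℝ => Real.log (1 + 2 / y)) (-(2 / (y * (y + 2)))) y := by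
    intro y hy
    have hinner : HasDerivAt (fun y : ℝ => 1 + 2 / y) (2 * (-(y ^ 2)⁻¹)) y := by
      simpa [one_div, div_eq_mul_inv] using (((hasDerivAt_inv hy.ne').const_mul 2).const_add 1)
    have hne : 1 + 2 / y ≠ 0 := by positivity
    have := hinner.log hne
    convert this using 1
    field_simp
  have hexp : ∀ y : ℝ, HasDerivAt (fun y : ℝ => Real.exp (-y)) (-Real.exp (-y)) y := by
    intro y
    simpa using ((hasDerivAt_id y).neg.exp)
  -- limits
  have hloglim1 : Tendsto (fun y : ℝ => Real.log (1 + 1 / y)) atTop (𝓝 0) := by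
    have : Tendsto (fun y : ℝ => 1 + 1 / y) atTop (𝓝 1) := by
      simpa using ((tendsto_const_nhds : Tendsto (fun _ : ℝ => (1:ℝ)) atTop (𝓝 1)).add
        tendsto_inv_atTop_zero)
    have := (Real.continuousAt_log (by norm_num : (1:ℝ) ≠ 0)).tendsto.comp this
    simpa [Function.comp_def] using this
  have hloglim2 : Tendsto (fun y : ℝ => Real.log (1 + 2 / y)) atTop (𝓝 0) := by
    have h2 : Tendsto (fun y : ℝ => 1 + 2 / y) atTop (𝓝 1) := by
      have : Tendsto (fun y : ℝ => 2 / y) atTop (𝓝 0) := by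
        simpa [div_eq_mul_inv] using tendsto_inv_atTop_zero.const_mul (2:ℝ)
      simpa using ((tendsto_const_nhds : Tendsto (fun _ : ℝ => (1:ℝ)) atTop (𝓝 1)).add this)
    have := (Real.continuousAt_log (by norm_num : (1:ℝ) ≠ 0)).tendsto.comp h2
    simpa [Function.comp_def] using this
  have hexplim : Tendsto (fun y : ℝ => Real.exp (-y)) atTop (𝓝 0) :=
    tendsto_exp_neg_atTop_nhds_zero
  -- Upper bound: φ y = E1 y - exp (-y) * log (1 + 1/y) is negative
  have hupper : E1 x - Real.exp (-x) * Real.log (1 + 1 / x) < 0 := by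
    refine aux_neg (φ := fun y => E1 y - Real.exp (-y) * Real.log (1 + 1 / y))
      (d := fun y => Real.exp (-y) * (Real.log (1 + 1 / y) - 1 / (y + 1)))
      ?_ ?_ ?_ hx
    · intro y hy
      have h := (E1_hasDeriv hy).sub ((hexp y).mul (hlog1 y hy))
      refine h.congr_deriv ?_
      have hy1 : y + 1 ≠ 0 := by positivity
      have hy0 : y ≠ 0 := ne_of_gt hy
      beta_reduce
      field_simp
      ring
    · intro y hy
      exact mul_pos (exp_pos _) (sub_pos.mpr (key1 hy))
    · simpa using E1_tendsto.sub (hexplim.mul hloglim1)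
  -- Lower bound: ψ y = (1/2) exp (-y) * log (1 + 2/y) - E1 y is negative
  have hlower : (1 / 2) * (Real.exp (-x) * Real.log (1 + 2 / x)) - E1 x < 0 := by
    refine aux_neg
      (φ := fun y => (1 / 2) * (Real.exp (-y) * Real.log (1 + 2 / y)) - E1 y)
      (d := fun y =>
        Real.exp (-y) * ((y + 1) / (y * (y + 2)) - (1 / 2) * Real.log (1 + 2 / y)))
      ?_ ?_ ?_ hx
    · intro y hy
      have h := ((((hexp y).mul (hlog2 y hy)).const_mul (1/2 : ℝ)).sub (E1_hasDeriv hy))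
      refine h.congr_deriv ?_
      have hy2 : y + 2 ≠ 0 := by positivity
      have hy0 : y ≠ 0 := ne_of_gt hy
      beta_reduce
      field_simp
      ring
    · intro y hy
      exact mul_pos (exp_pos _) (sub_pos.mpr (key2 hy))
    · simpa using ((hexplim.mul hloglim2).const_mul (1/2 : ℝ)).sub E1_tendsto
  constructor
  · have h := hlower
    have hE : Real.exp x * ((1 / 2) * (Real.exp (-x) * Real.log (1 + 2 / x))) =
        (1 / 2) * Real.log (1 + 2 / x) := by
      rw [Real.exp_neg]
      field_simp
    calc (1 / 2) * Real.log (1 + 2 / x)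
        = Real.exp x * ((1 / 2) * (Real.exp (-x) * Real.log (1 + 2 / x))) := hE.symm
      _ < Real.exp x * E1 x := by
          exact mul_lt_mul_of_pos_left (by linarith) (exp_pos x)
  · have hE : Real.exp x * (Real.exp (-x) * Real.log (1 + 1 / x)) =
        Real.log (1 + 1 / x) := by
      rw [Real.exp_neg]
      field_simp
    calc Real.exp x * E1 x
        < Real.exp x * (Real.exp (-x) * Real.log (1 + 1 / x)) :=
          mul_lt_mul_of_pos_left (by linarith) (exp_pos x)
      _ = Real.log (1 + 1 / x) := hE
end

section
/- As x → 0+, the exponential integral satisfies E1(x) = -log x - γ + o(1); equivalently, E1(x) + log x tends to -γ as x → 0+, where γ is the Euler–Mascheroni constant. -/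
open MeasureTheory Real Filter

section Aux
open Set
lemma elog_integrable : IntegrableOn (fun t : ℝ => Real.exp (-t) * Real.log t) (Set.Ioi 0) := by
  have hmeas : Measurable (fun t : ℝ => Real.exp (-t) * Real.log t) :=
    (Real.measurable_exp.comp measurable_neg).mul Real.measurable_log
  rw [← Set.Ioo_union_Ici_eq_Ioi (zero_lt_one), integrableOn_union]
  constructor
  · refine Integrable.mono (((intervalIntegral.integrableOn_Ioo_rpow_iff one_pos).mpr
      (by norm_num : (-1:ℝ) < -(1/2))).const_mul 2) hmeas.aestronglyMeasurable ?_
    rw [ae_restrict_iff' measurableSet_Ioo]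
    refine ae_of_all _ fun t ht => ?_
    have ht0 : 0 < t := ht.1
    have hlog : Real.log t ≤ 0 := Real.log_nonpos ht0.le (le_of_lt ht.2)
    have h1 : ‖Real.exp (-t) * Real.log t‖ ≤ -Real.log t := by
      rw [norm_mul, Real.norm_eq_abs, Real.norm_eq_abs, abs_of_nonneg (Real.exp_nonneg _),
        abs_of_nonpos hlog]
      nlinarith [Real.exp_le_one_iff.mpr (neg_nonpos.mpr ht0.le), Real.exp_pos (-t),
        neg_nonneg.mpr hlog]
    refine h1.trans ?_
    have hrp : (0:ℝ) < t ^ (-(1/2) : ℝ) := Real.rpow_pos_of_pos ht0 _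
    have h2 : -Real.log t = 2 * Real.log (t ^ (-(1/2) : ℝ)) := by
      rw [Real.log_rpow ht0]; ring
    have h3 : Real.log (t ^ (-(1/2) : ℝ)) ≤ t ^ (-(1/2) : ℝ) := by
      linarith [Real.log_le_sub_one_of_pos hrp]
    rw [norm_mul, Real.norm_eq_abs, Real.norm_eq_abs, abs_of_nonneg hrp.le]
    rw [h2]
    calc 2 * Real.log (t ^ (-(1/2) : ℝ)) ≤ 2 * t ^ (-(1/2) : ℝ) := by linarith
    _ ≤ |2| * t ^ (-(1/2) : ℝ) := by norm_num
  · have hg : IntegrableOn (fun t : ℝ => Real.exp (-t) * t ^ (1:ℝ)) (Set.Ici 1) := by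
      have h := Real.GammaIntegral_convergent (by norm_num : (0:ℝ) < 2)
      have h21 : (2:ℝ) - 1 = 1 := by norm_num
      rw [h21] at h
      exact h.mono_set (fun t ht => Set.mem_Ioi.mpr (lt_of_lt_of_le zero_lt_one ht))
    refine Integrable.mono hg hmeas.aestronglyMeasurable ?_
    rw [ae_restrict_iff' measurableSet_Ici]
    refine ae_of_all _ fun t ht => ?_
    have ht1 : (1:ℝ) ≤ t := ht
    have ht0 : (0:ℝ) < t := lt_of_lt_of_le zero_lt_one ht1
    have hlog : 0 ≤ Real.log t := Real.log_nonneg ht1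
    have hle : Real.log t ≤ t ^ (1:ℝ) := by
      rw [Real.rpow_one]; linarith [Real.log_le_sub_one_of_pos ht0]
    rw [norm_mul, norm_mul, Real.norm_eq_abs, Real.norm_eq_abs, Real.norm_eq_abs,
      abs_of_nonneg (Real.exp_nonneg _), abs_of_nonneg hlog,
      abs_of_nonneg (Real.rpow_nonneg ht0.le _)]
    exact mul_le_mul_of_nonneg_left hle (Real.exp_nonneg _)

lemma elog_integral : (∫ t in Set.Ioi (0:ℝ), Real.exp (-t) * Real.log t)
    = -Real.eulerMascheroniConstant := by
  have hC := Complex.hasDerivAt_GammaIntegral (s := 1) (by norm_num)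
  have hval : (∫ t : ℝ in Set.Ioi 0, (t:ℂ) ^ ((1:ℂ) - 1) * (Real.log t * Real.exp (-t)))
      = ((∫ t in Set.Ioi (0:ℝ), Real.exp (-t) * Real.log t : ℝ) : ℂ) := by
    calc (∫ t : ℝ in Set.Ioi 0, (t:ℂ) ^ ((1:ℂ) - 1) * (Real.log t * Real.exp (-t)))
        = ∫ t in Set.Ioi (0:ℝ), ((Real.exp (-t) * Real.log t : ℝ) : ℂ) := by
          refine integral_congr_ae (ae_of_all _ fun t => ?_)
          push_cast
          ring_nf
          simp
      _ = _ := integral_ofReal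
  rw [hval] at hC
  have hopen : {s : ℂ | 0 < s.re} ∈ nhds (1 : ℂ) :=
    (isOpen_lt continuous_const Complex.continuous_re).mem_nhds (by norm_num)
  have heq : Complex.Gamma =ᶠ[nhds (1:ℂ)] Complex.GammaIntegral := by
    filter_upwards [hopen] with s hs using Complex.Gamma_eq_integral hs
  have hC' : HasDerivAt Complex.Gamma
      (((∫ t in Set.Ioi (0:ℝ), Real.exp (-t) * Real.log t : ℝ) : ℂ)) 1 :=
    hC.congr_of_eventuallyEq heq
  have := hC'.unique Complex.hasDerivAt_Gamma_one
  exact_mod_cast this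

lemma einv_integrable {x : ℝ} (hx : 0 < x) :
    IntegrableOn (fun t : ℝ => Real.exp (-t) / t) (Set.Ioi x) := by
  have hg : IntegrableOn (fun t : ℝ => Real.exp (-t) * x⁻¹) (Set.Ioi x) := by
    have h := (exp_neg_integrableOn_Ioi x (zero_lt_one))
    simp only [neg_one_mul] at h
    exact h.mul_const x⁻¹
  refine Integrable.mono hg
    (((Real.measurable_exp.comp measurable_neg).div measurable_id).aestronglyMeasurable) ?_
  rw [ae_restrict_iff' measurableSet_Ioi]
  refine ae_of_all _ fun t ht => ?_
  have htx : x < t := ht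
  have ht0 : 0 < t := hx.trans htx
  rw [Real.norm_eq_abs, Real.norm_eq_abs, abs_of_nonneg (by positivity),
    abs_of_nonneg (by positivity)]
  rw [div_eq_mul_inv]
  exact mul_le_mul_of_nonneg_left (by rw [inv_le_inv₀ ht0 hx]; exact htx.le) (Real.exp_nonneg _)

lemma E1_eq {x : ℝ} (hx : 0 < x) :
    E1 x = -(Real.exp (-x) * Real.log x) + ∫ t in Set.Ioi x, Real.exp (-t) * Real.log t := by
  have hint2 : IntegrableOn (fun t : ℝ => Real.exp (-t) * Real.log t) (Set.Ioi x) :=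
    elog_integrable.mono_set (Set.Ioi_subset_Ioi hx.le)
  have hderiv : ∀ t ∈ Set.Ioi x, HasDerivAt (fun t : ℝ => Real.exp (-t) * Real.log t)
      (Real.exp (-t) / t - Real.exp (-t) * Real.log t) t := by
    intro t ht
    have ht0 : 0 < t := hx.trans ht
    have he : HasDerivAt (fun t : ℝ => Real.exp (-t)) (-Real.exp (-t)) t := by
      exact ((Real.hasDerivAt_exp (-t)).comp t (hasDerivAt_neg t)).congr_deriv (by ring)
    have := he.mul (Real.hasDerivAt_log ht0.ne')
    refine this.congr_deriv ?_
    field_simp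
    ring
  have htend : Tendsto (fun t : ℝ => Real.exp (-t) * Real.log t) atTop (nhds 0) := by
    refine squeeze_zero' ?_ ?_ (by simpa using tendsto_pow_mul_exp_neg_atTop_nhds_zero 1)
    · filter_upwards [eventually_ge_atTop (1:ℝ)] with t ht
      exact mul_nonneg (Real.exp_nonneg _) (Real.log_nonneg ht)
    · filter_upwards [eventually_ge_atTop (1:ℝ)] with t ht
      have ht0 : 0 < t := lt_of_lt_of_le zero_lt_one ht
      have : Real.log t ≤ t := by linarith [Real.log_le_sub_one_of_pos ht0]
      calc Real.exp (-t) * Real.log t ≤ Real.exp (-t) * t :=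
            mul_le_mul_of_nonneg_left this (Real.exp_nonneg _)
        _ = t * Real.exp (-t) := by ring
  have hcont : ContinuousWithinAt (fun t : ℝ => Real.exp (-t) * Real.log t) (Set.Ici x) x := by
    refine ContinuousAt.continuousWithinAt ?_
    exact ((Real.continuous_exp.comp continuous_neg).continuousAt).mul
      (Real.continuousAt_log hx.ne')
  have key := integral_Ioi_of_hasDerivAt_of_tendsto hcont hderiv
    ((einv_integrable hx).sub hint2) htend
  rw [integral_sub (einv_integrable hx) hint2] at key
  have : E1 x = ∫ t in Set.Ioi x, Real.exp (-t) / t := rfl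
  rw [this]
  rw [zero_sub] at key
  linarith [key]

private theorem main_aux :
    Tendsto (fun x : ℝ => E1 x + Real.log x) (nhdsWithin 0 (Set.Ioi 0))
      (nhds (-Real.eulerMascheroniConstant)) := by
  set f : ℝ → ℝ := fun t => Real.exp (-t) * Real.log t with hf
  have h1 : Tendsto (fun x : ℝ => (1 - Real.exp (-x)) * Real.log x)
      (nhdsWithin 0 (Set.Ioi 0)) (nhds 0) := by
    have hg : Tendsto (fun x : ℝ => -(Real.log x * x)) (nhdsWithin 0 (Set.Ioi 0)) (nhds 0) := by
      have := (tendsto_log_mul_rpow_nhdsGT_zero one_pos).neg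
      simp only [Real.rpow_one, neg_zero] at this
      exact this
    rw [show (0:ℝ) = -0 by norm_num] at hg
    have habs : Tendsto (fun x : ℝ => |(1 - Real.exp (-x)) * Real.log x|)
        (nhdsWithin 0 (Set.Ioi 0)) (nhds 0) := by
      refine squeeze_zero' (Eventually.of_forall fun x => abs_nonneg _) ?_ (by simpa using hg)
      filter_upwards [Ioo_mem_nhdsGT_of_mem (Set.left_mem_Ico.mpr zero_lt_one)] with x hx
      have hx0 : 0 < x := hx.1
      have hx1 : x < 1 := hx.2
      have hexp : Real.exp (-x) ≤ 1 := Real.exp_le_one_iff.mpr (by linarith)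
      have h1x : 1 - Real.exp (-x) ≤ x := by linarith [Real.add_one_le_exp (-x)]
      have hlog : Real.log x ≤ 0 := Real.log_nonpos hx0.le hx1.le
      rw [abs_mul, abs_of_nonneg (by linarith : 0 ≤ 1 - Real.exp (-x)), abs_of_nonpos hlog]
      nlinarith
    exact tendsto_zero_iff_abs_tendsto_zero _ |>.mpr habs
  have h2 : Tendsto (fun x : ℝ => ∫ t in Set.Ioi (0:ℝ), (Set.Ioi x).indicator f t)
      (nhdsWithin 0 (Set.Ioi 0)) (nhds (∫ t in Set.Ioi (0:ℝ), f t)) := by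
    refine tendsto_integral_filter_of_dominated_convergence (fun t => |f t|) ?_ ?_
      elog_integrable.abs ?_
    · refine Eventually.of_forall fun x => ?_
      exact (((Real.measurable_exp.comp measurable_neg).mul
        Real.measurable_log).indicator measurableSet_Ioi).aestronglyMeasurable
    · refine Eventually.of_forall fun x => ae_of_all _ fun t => ?_
      simpa using norm_indicator_le_norm_self f t (s := Set.Ioi x)
    · rw [ae_restrict_iff' measurableSet_Ioi]
      refine ae_of_all _ fun t ht => ?_
      have ht0 : 0 < t := ht
      refine Tendsto.congr' ?_ tendsto_const_nhds
      filter_upwards [Ioo_mem_nhdsGT_of_mem (Set.left_mem_Ico.mpr ht0)] with x hx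
      exact (Set.indicator_of_mem (by exact hx.2 : t ∈ Set.Ioi x) f).symm
  rw [← elog_integral] at *
  have := h1.add h2
  rw [zero_add] at this
  refine this.congr' ?_
  filter_upwards [self_mem_nhdsWithin] with x hx
  have hx0 : (0:ℝ) < x := hx
  rw [E1_eq hx0]
  have : (∫ t in Set.Ioi (0:ℝ), (Set.Ioi x).indicator f t) = ∫ t in Set.Ioi x, f t := by
    rw [setIntegral_indicator measurableSet_Ioi, Set.Ioi_inter_Ioi, max_eq_right hx0.le]
  rw [this]
  ring
end Aux

theorem E1_add_log_tendsto_neg_gamma :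
    Tendsto (fun x : ℝ => E1 x + Real.log x) (nhdsWithin 0 (Set.Ioi 0))
      (nhds (-Real.eulerMascheroniConstant)) := main_aux
end
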